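/- Let α, β be nonzero complex numbers with |α|² + |β|² = 1, let a be a complex number with 0 < |a| < 1 and a ≠ α·conj(β), and let γ be the unique real root of the cubic z³ + 7z² + 12z − 1. If |αβ| − |α|²·(1 − |α|⁴·(1−|a|²)/|1 − conj(a)·α·conj(β)|²)·(1−|αβ|) < 0, then |β|² < 1/(4+γ). (This inequality is the condition |r| < 1 governing failure of the wandering subspace property for the invariant subspace associated with the Blaschke factor θ(z) = (z−a)/(1−conj(a)z).) -/

import Mathlib

open scoped ComplexConjugate

set_option maxHeartbeats 800000

/-- If the quantity `|r| < 1` condition holds for the Blaschke factor with zero `a`,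
then `|β|² < 1/(4+γ)`, `γ` being the unique real root of `z³ + 7z² + 12z − 1`. -/
theorem blaschke_wsp_failure_necessary (α β a : ℂ) (hα : α ≠ 0) (hβ : β ≠ 0)
    (hnorm : ‖α‖ ^ 2 + ‖β‖ ^ 2 = 1)
    (ha0 : 0 < ‖a‖) (ha1 : ‖a‖ < 1) (ha : a ≠ α * conj β)
    (γ : ℝ) (hγ : γ ^ 3 + 7 * γ ^ 2 + 12 * γ - 1 = 0)
    (hγuniq : ∀ y : ℝ, y ^ 3 + 7 * y ^ 2 + 12 * y - 1 = 0 → y = γ)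
    (hr : ‖α * β‖ -
        ‖α‖ ^ 2 *
          (1 - ‖α‖ ^ 4 * (1 - ‖a‖ ^ 2) /
            ‖1 - conj a * (α * conj β)‖ ^ 2) *
          (1 - ‖α * β‖) < 0) :
    ‖β‖ ^ 2 < 1 / (4 + γ) := by
  -- γ > 0
  have hγpos : 0 < γ := by
    by_contra h
    push_neg at h
    nlinarith [sq_nonneg (γ + 4), sq_nonneg (γ + 3), sq_nonneg γ, sq_nonneg (γ + 7/2),
      mul_nonneg (neg_nonneg.2 h) (sq_nonneg (γ + 7/2))]
  have hαpos : 0 < ‖α‖ := norm_pos_iff.mpr hα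
  have hβpos : 0 < ‖β‖ := norm_pos_iff.mpr hβ
  set s := ‖α‖ ^ 2 with hs
  set t := ‖β‖ ^ 2 with ht
  set A := ‖α * β‖ with hA
  have hs0 : 0 < s := by positivity
  have ht0 : 0 < t := by positivity
  have hAe : A = ‖α‖ * ‖β‖ := norm_mul _ _
  have hA2 : A ^ 2 = s * t := by rw [hAe, hs, ht]; ring
  have hA0 : 0 ≤ A := norm_nonneg _
  have hAle : A ≤ 1/2 := by nlinarith [sq_nonneg (‖α‖ - ‖β‖)]
  have hK : 0 ≤ ‖α‖ ^ 4 * (1 - ‖a‖ ^ 2) /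
      ‖1 - conj a * (α * conj β)‖ ^ 2 := by
    apply div_nonneg
    · apply mul_nonneg (by positivity)
      nlinarith [norm_nonneg a]
    · positivity
  -- from hr: A < s * (1 - A)
  have hmain : A < s * (1 - A) := by
    have h1A : (0:ℝ) ≤ 1 - A := by linarith
    nlinarith [hr, mul_nonneg (mul_nonneg hs0.le hK) h1A]
  have hts : s = 1 - t := by linarith
  have ht1 : t < 1 := by linarith
  -- A (2 - t) < 1 - t, square it
  have h1 : A * (2 - t) < 1 - t := by nlinarith [hmain]
  have h2 : A ^ 2 * (2 - t) ^ 2 < (1 - t) ^ 2 := by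
    have hp : 0 < 1 - t + A * (2 - t) := by nlinarith
    nlinarith [mul_pos (sub_pos.2 h1) hp]
  have hpt : t ^ 3 - 4 * t ^ 2 + 5 * t - 1 < 0 := by
    rw [hA2, hts] at h2
    nlinarith [h2, ht1]
  set x := 1 / (4 + γ) with hx
  have h4γ : (0:ℝ) < 4 + γ := by linarith
  have hx0 : 0 < x := by positivity
  have hx14 : x < 1/4 := by
    rw [hx, div_lt_div_iff₀ h4γ (by norm_num)]; linarith
  have hne : (4 + γ) ≠ 0 := ne_of_gt h4γ
  have key : (4 + γ) ^ 3 * (x ^ 3 - 4 * x ^ 2 + 5 * x - 1)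
      = -(γ ^ 3 + 7 * γ ^ 2 + 12 * γ - 1) := by
    rw [hx]; field_simp; ring
  have hx3 : x ^ 3 - 4 * x ^ 2 + 5 * x - 1 = 0 := by
    rw [hγ] at key
    have h3 : ((4:ℝ) + γ) ^ 3 ≠ 0 := pow_ne_zero _ hne
    have := key
    simp only [neg_zero] at this
    exact (mul_eq_zero.1 this).resolve_left h3
  have hQ : 0 < t ^ 2 + t * x + x ^ 2 - 4 * t - 4 * x + 5 := by
    nlinarith [sq_nonneg (2 * t + x - 4), hx0, hx14]
  have hfac : (t - x) * (t ^ 2 + t * x + x ^ 2 - 4 * t - 4 * x + 5)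
      = (t ^ 3 - 4 * t ^ 2 + 5 * t - 1) - (x ^ 3 - 4 * x ^ 2 + 5 * x - 1) := by ring
  have hfneg : (t - x) * (t ^ 2 + t * x + x ^ 2 - 4 * t - 4 * x + 5) < 0 := by
    rw [hfac, hx3]; linarith
  by_contra h
  push_neg at h
  exact absurd hfneg (not_lt.2 (mul_nonneg (sub_nonneg.2 h) hQ.le))
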